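/- For every natural number n, the integral over [-1,1] of (P_{2n+1}(x)/x)^2 dx equals 2, where P_k denotes the k-th Legendre polynomial. (Note that P_{2n+1}(0) = 0, so P_{2n+1}(x)/x is a polynomial.) -/

import Mathlib

open MeasureTheory Real

/-- The Legendre polynomials, defined by the three-term recurrence
`(n+1) P_{n+1}(x) = (2n+1) x P_n(x) - n P_{n-1}(x)` with `P_0 = 1`, `P_1 = x`. -/
noncomputable def legendreP : ℕ → ℝ → ℝ
  | 0, _ => 1
  | 1, x => x
  | n + 2, x =>
      ((2 * (n : ℝ) + 3) * x * legendreP (n + 1) x - ((n : ℝ) + 1) * legendreP n x) / ((n : ℝ) + 2)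

noncomputable def dleg : ℕ → ℝ → ℝ
  | 0, _ => 0
  | 1, _ => 1
  | n + 2, x =>
      ((2 * (n : ℝ) + 3) * (legendreP (n+1) x + x * dleg (n + 1) x) - ((n : ℝ) + 1) * dleg n x) / ((n : ℝ) + 2)

lemma legendreP_zero (x : ℝ) : legendreP 0 x = 1 := rfl
lemma legendreP_one (x : ℝ) : legendreP 1 x = x := rfl
lemma dleg_zero (x : ℝ) : dleg 0 x = 0 := rfl
lemma dleg_one (x : ℝ) : dleg 1 x = 1 := rfl
lemma legendreP_add_two (n : ℕ) (x : ℝ) : legendreP (n+2) x =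
   ((2 * (n : ℝ) + 3) * x * legendreP (n + 1) x - ((n : ℝ) + 1) * legendreP n x) / ((n : ℝ) + 2) := rfl
lemma dleg_add_two (n : ℕ) (x : ℝ) : dleg (n+2) x =
  ((2 * (n : ℝ) + 3) * (legendreP (n+1) x + x * dleg (n + 1) x) - ((n : ℝ) + 1) * dleg n x) / ((n : ℝ) + 2) := rfl

lemma ident : ∀ n : ℕ, ∀ x : ℝ,
    dleg (n+1) x = x * dleg n x + ((n:ℝ)+1) * legendreP n x ∧
    x * dleg (n+1) x - dleg n x = ((n:ℝ)+1) * legendreP (n+1) x := by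
  intro n
  induction n with
  | zero =>
    intro x
    norm_num [dleg_zero, dleg_one, legendreP_zero, legendreP_one]
  | succ n ih =>
    intro x
    obtain ⟨H1, H2⟩ := ih x
    have hne : ((n:ℝ)+2) ≠ 0 := by positivity
    constructor
    · rw [dleg_add_two]
      field_simp
      push_cast
      linear_combination ((n:ℝ)+1) * H2
    · rw [dleg_add_two, legendreP_add_two]
      field_simp
      push_cast
      linear_combination (-((n:ℝ)+2)) * H1 + ((2*(n:ℝ)+3)*x) * H2

lemma pearson (n : ℕ) (x : ℝ) :
    (x^2 - 1) * dleg (n+1) x = ((n:ℝ)+1) * (x * legendreP (n+1) x - legendreP n x) := by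
  obtain ⟨H1, H2⟩ := ident n x
  linear_combination (-1 : ℝ) * H1 + x * H2

lemma leg_cont : ∀ n, Continuous (legendreP n) := by
  have : ∀ n, Continuous (legendreP n) ∧ Continuous (legendreP (n+1)) := by
    intro n
    induction n with
    | zero => exact ⟨continuous_const, continuous_id⟩
    | succ n ih =>
      refine ⟨ih.2, ?_⟩
      rw [show legendreP (n+2) = fun x => ((2 * (n : ℝ) + 3) * x * legendreP (n + 1) x - ((n : ℝ) + 1) * legendreP n x) / ((n : ℝ) + 2) from rfl]
      exact ((((continuous_const.mul continuous_id).mul ih.2).sub (continuous_const.mul ih.1))).div_const _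
  exact fun n => (this n).1

lemma hasDerivAt_legendre : ∀ n, ∀ x : ℝ, HasDerivAt (legendreP n) (dleg n x) x := by
  have : ∀ n, ∀ x : ℝ, HasDerivAt (legendreP n) (dleg n x) x ∧ HasDerivAt (legendreP (n+1)) (dleg (n+1) x) x := by
    intro n
    induction n with
    | zero =>
      intro x
      refine ⟨?_, ?_⟩
      · show HasDerivAt (legendreP 0) 0 x
        exact hasDerivAt_const x 1
      · show HasDerivAt (legendreP 1) 1 x
        exact hasDerivAt_id x
    | succ n ih =>
      intro x
      refine ⟨(ih x).2, ?_⟩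
      rw [show legendreP (n+2) = fun x => ((2 * (n : ℝ) + 3) * x * legendreP (n + 1) x - ((n : ℝ) + 1) * legendreP n x) / ((n : ℝ) + 2) from rfl, dleg_add_two]
      have h1 : HasDerivAt (fun x : ℝ => x * legendreP (n+1) x) (legendreP (n+1) x + x * dleg (n+1) x) x := by
        exact ((hasDerivAt_id x).mul (ih x).2).congr_deriv (by simp)
      have h3 := ((h1.const_mul ((2 * (n : ℝ) + 3))).sub (((ih x).1).const_mul ((n : ℝ) + 1))).div_const ((n : ℝ) + 2)
      refine h3.congr_of_eventuallyEq (Filter.Eventually.of_forall fun y => ?_)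
      simp only [Pi.sub_apply]
      ring
  exact fun n x => (this n x).1

lemma hasDerivAt_g (n : ℕ) (x : ℝ) :
    HasDerivAt (fun y => (y^2-1) * dleg n y) (((n:ℝ)*((n:ℝ)+1)) * legendreP n x) x := by
  cases n with
  | zero =>
    simp only [dleg_zero, mul_zero]
    simpa using hasDerivAt_const x (0:ℝ)
  | succ n =>
    rw [show (fun y => (y^2-1) * dleg (n+1) y) = fun y => ((n:ℝ)+1) * (y * legendreP (n+1) y - legendreP n y) from funext fun y => pearson n y]
    have h1 : HasDerivAt (fun y : ℝ => y * legendreP (n+1) y) (legendreP (n+1) x + x * dleg (n+1) x) x := by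
      exact ((hasDerivAt_id x).mul (hasDerivAt_legendre (n+1) x)).congr_deriv (by simp)
    have h2 := ((h1.sub (hasDerivAt_legendre n x)).const_mul ((n:ℝ)+1))
    refine h2.congr_deriv ?_
    have H2 := (ident n x).2
    push_cast
    linear_combination ((n:ℝ)+1) * H2

lemma njective : Function.Injective (fun n : ℕ => n * (n+1)) := by
  have : StrictMono (fun n : ℕ => n * (n+1)) := strictMono_nat_of_lt_succ (fun n => by nlinarith)
  exact this.injective

lemma orth {m k : ℕ} (h : m ≠ k) :
    ∫ x in (-1:ℝ)..1, legendreP m x * legendreP k x = 0 := by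
  set c : ℝ := (m:ℝ)*((m:ℝ)+1) - (k:ℝ)*((k:ℝ)+1) with hc
  have hcne : c ≠ 0 := by
    have h2 : (m * (m+1) : ℕ) ≠ (k * (k+1) : ℕ) := fun hh => h (njective hh)
    have : ((m * (m+1) : ℕ) : ℝ) ≠ ((k * (k+1) : ℕ) : ℝ) := by exact_mod_cast h2
    rw [hc]; push_cast at this ⊢; exact sub_ne_zero.mpr this
  have hd : ∀ x ∈ Set.uIcc (-1:ℝ) 1, HasDerivAt
      (fun x => ((x^2-1)*dleg m x)*legendreP k x - legendreP m x*((x^2-1)*dleg k x))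
      (c * (legendreP m x * legendreP k x)) x := by
    intro x hx
    have h1 := (hasDerivAt_g m x).mul (hasDerivAt_legendre k x)
    have h2 := (hasDerivAt_legendre m x).mul (hasDerivAt_g k x)
    have h3 := h1.sub h2
    refine h3.congr_deriv ?_
    rw [hc]; ring
  have hi : IntervalIntegrable (fun x => c * (legendreP m x * legendreP k x)) volume (-1:ℝ) 1 :=
    (continuous_const.mul ((leg_cont m).mul (leg_cont k))).intervalIntegrable _ _
  have key := intervalIntegral.integral_eq_sub_of_hasDerivAt hd hi
  rw [intervalIntegral.integral_const_mul] at key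
  norm_num at key
  rcases key with key | key
  · exact absurd key hcne
  · exact key

lemma X (k : ℕ) : ∫ x in (-1:ℝ)..1, x * legendreP (k+1) x * legendreP k x =
    ((k:ℝ)+1) * (∫ x in (-1:ℝ)..1, legendreP k x * legendreP k x) / (2*(k:ℝ)+3) := by
  have hpt : ∀ x : ℝ, x * legendreP (k+1) x * legendreP k x =
      ((k:ℝ)+2)/(2*(k:ℝ)+3) * (legendreP (k+2) x * legendreP k x)
      + ((k:ℝ)+1)/(2*(k:ℝ)+3) * (legendreP k x * legendreP k x) := by
    intro x
    rw [legendreP_add_two]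
    have h1 : (2*(k:ℝ)+3) ≠ 0 := by positivity
    have h2 : ((k:ℝ)+2) ≠ 0 := by positivity
    field_simp
    ring
  rw [intervalIntegral.integral_congr (g := fun x =>
      ((k:ℝ)+2)/(2*(k:ℝ)+3) * (legendreP (k+2) x * legendreP k x)
      + ((k:ℝ)+1)/(2*(k:ℝ)+3) * (legendreP k x * legendreP k x)) (fun x _ => hpt x)]
  rw [intervalIntegral.integral_add (f := fun x => ((k:ℝ)+2)/(2*(k:ℝ)+3) * (legendreP (k+2) x * legendreP k x))
      (g := fun x => ((k:ℝ)+1)/(2*(k:ℝ)+3) * (legendreP k x * legendreP k x))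
      ((continuous_const.mul ((leg_cont (k+2)).mul (leg_cont k))).intervalIntegrable _ _)
      ((continuous_const.mul ((leg_cont k).mul (leg_cont k))).intervalIntegrable _ _),
    intervalIntegral.integral_const_mul, intervalIntegral.integral_const_mul,
    orth (by omega : k+2 ≠ k)]
  ring

lemma norm_leg : ∀ m : ℕ, ∫ x in (-1:ℝ)..1, legendreP m x * legendreP m x = 2/(2*(m:ℝ)+1) := by
  have base0 : ∫ x in (-1:ℝ)..1, legendreP 0 x * legendreP 0 x = 2/(2*((0:ℕ):ℝ)+1) := by
    norm_num [legendreP_zero]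
  have base1 : ∫ x in (-1:ℝ)..1, legendreP 1 x * legendreP 1 x = 2/(2*((1:ℕ):ℝ)+1) := by
    have : ∀ x : ℝ, legendreP 1 x * legendreP 1 x = x^2 := fun x => by
      rw [legendreP_one]; ring
    rw [intervalIntegral.integral_congr (g := fun x : ℝ => x^2) (fun x _ => this x)]
    rw [integral_pow]
    norm_num
  have step : ∀ k : ℕ, (∫ x in (-1:ℝ)..1, legendreP (k+1) x * legendreP (k+1) x = 2/(2*((k+1:ℕ):ℝ)+1)) →
      ∫ x in (-1:ℝ)..1, legendreP (k+2) x * legendreP (k+2) x = 2/(2*((k+2:ℕ):ℝ)+1) := by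
    intro k ih
    have hpt : ∀ x : ℝ, legendreP (k+2) x * legendreP (k+2) x =
        (2*(k:ℝ)+3)/((k:ℝ)+2) * (x * legendreP (k+2) x * legendreP (k+1) x)
        - ((k:ℝ)+1)/((k:ℝ)+2) * (legendreP (k+2) x * legendreP k x) := by
      intro x
      rw [legendreP_add_two]
      have h2 : ((k:ℝ)+2) ≠ 0 := by positivity
      field_simp
    rw [intervalIntegral.integral_congr (g := fun x =>
        (2*(k:ℝ)+3)/((k:ℝ)+2) * (x * legendreP (k+2) x * legendreP (k+1) x)
        - ((k:ℝ)+1)/((k:ℝ)+2) * (legendreP (k+2) x * legendreP k x)) (fun x _ => hpt x)]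
    have i1 : IntervalIntegrable (fun x : ℝ => (2*(k:ℝ)+3)/((k:ℝ)+2) * (x * legendreP (k+2) x * legendreP (k+1) x)) volume (-1) 1 :=
      Continuous.intervalIntegrable (continuous_const.mul (((continuous_id.mul (leg_cont (k+2))).mul (leg_cont (k+1))))) _ _
    have i2 : IntervalIntegrable (fun x : ℝ => ((k:ℝ)+1)/((k:ℝ)+2) * (legendreP (k+2) x * legendreP k x)) volume (-1) 1 :=
      Continuous.intervalIntegrable (continuous_const.mul (((leg_cont (k+2)).mul (leg_cont k)))) _ _
    rw [intervalIntegral.integral_sub i1 i2,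
      intervalIntegral.integral_const_mul, intervalIntegral.integral_const_mul,
      orth (by omega : k+2 ≠ k), X (k+1), ih]
    have h2 : ((k:ℝ)+2) ≠ 0 := by positivity
    push_cast
    have h3 : (2*(k:ℝ)+5) ≠ 0 := by positivity
    have h4 : (2*(k:ℝ)+3) ≠ 0 := by positivity
    field_simp
    ring
  intro m
  induction m using Nat.twoStepInduction with
  | zero => exact base0
  | one => exact base1
  | more k ih1 ih2 => exact step k ih2

noncomputable def Qf : ℕ → ℝ → ℝ
  | 0, _ => 1
  | n+1, x => ((4*(n:ℝ)+5) * legendreP (2*n+2) x - (2*(n:ℝ)+2) * Qf n x) / (2*(n:ℝ)+3)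

lemma Qf_zero (x : ℝ) : Qf 0 x = 1 := rfl
lemma Qf_succ (n : ℕ) (x : ℝ) : Qf (n+1) x =
    ((4*(n:ℝ)+5) * legendreP (2*n+2) x - (2*(n:ℝ)+2) * Qf n x) / (2*(n:ℝ)+3) := rfl

lemma Qf_cont : ∀ n, Continuous (Qf n) := by
  intro n
  induction n with
  | zero => exact continuous_const
  | succ n ih =>
    rw [show Qf (n+1) = fun x => ((4*(n:ℝ)+5) * legendreP (2*n+2) x - (2*(n:ℝ)+2) * Qf n x) / (2*(n:ℝ)+3) from rfl]
    exact ((continuous_const.mul (leg_cont (2*n+2))).sub (continuous_const.mul ih)).div_const _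

lemma Qf_eq (n : ℕ) (x : ℝ) (hx : x ≠ 0) : Qf n x = legendreP (2*n+1) x / x := by
  induction n with
  | zero =>
    rw [Qf_zero, show (2*0+1) = 1 from rfl, legendreP_one, div_self hx]
  | succ n ih =>
    rw [Qf_succ, ih, show 2*(n+1)+1 = (2*n+1)+2 from by omega, legendreP_add_two (2*n+1)]
    have h1 : (2*(n:ℝ)+3) ≠ 0 := by positivity
    push_cast
    field_simp
    ring
lemma Qf_orth : ∀ n m : ℕ, 2*n+1 ≤ m → ∫ x in (-1:ℝ)..1, legendreP m x * Qf n x = 0 := by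
  intro n
  induction n with
  | zero =>
    intro m hm
    have : ∀ x : ℝ, legendreP m x * Qf 0 x = legendreP m x * legendreP 0 x := fun x => by
      rw [Qf_zero, legendreP_zero]
    rw [intervalIntegral.integral_congr (fun x _ => this x), orth (by omega : m ≠ 0)]
  | succ n ih =>
    intro m hm
    have hpt : ∀ x : ℝ, legendreP m x * Qf (n+1) x =
        (4*(n:ℝ)+5)/(2*(n:ℝ)+3) * (legendreP m x * legendreP (2*n+2) x)
        - (2*(n:ℝ)+2)/(2*(n:ℝ)+3) * (legendreP m x * Qf n x) := by
      intro x
      rw [Qf_succ]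
      have h1 : (2*(n:ℝ)+3) ≠ 0 := by positivity
      field_simp
    have i1 : IntervalIntegrable (fun x : ℝ => (4*(n:ℝ)+5)/(2*(n:ℝ)+3) * (legendreP m x * legendreP (2*n+2) x)) volume (-1) 1 :=
      Continuous.intervalIntegrable (continuous_const.mul ((leg_cont m).mul (leg_cont (2*n+2)))) _ _
    have i2 : IntervalIntegrable (fun x : ℝ => (2*(n:ℝ)+2)/(2*(n:ℝ)+3) * (legendreP m x * Qf n x)) volume (-1) 1 :=
      Continuous.intervalIntegrable (continuous_const.mul ((leg_cont m).mul (Qf_cont n))) _ _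
    rw [intervalIntegral.integral_congr (fun x _ => hpt x),
      intervalIntegral.integral_sub i1 i2,
      intervalIntegral.integral_const_mul, intervalIntegral.integral_const_mul,
      orth (by omega : m ≠ 2*n+2), ih m (by omega)]
    ring

lemma Qf_norm : ∀ n : ℕ, ∫ x in (-1:ℝ)..1, Qf n x * Qf n x = 2 := by
  intro n
  induction n with
  | zero => norm_num [Qf_zero]
  | succ n ih =>
    have hpt : ∀ x : ℝ, Qf (n+1) x * Qf (n+1) x =
        (4*(n:ℝ)+5)^2/(2*(n:ℝ)+3)^2 * (legendreP (2*n+2) x * legendreP (2*n+2) x)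
        - (2*(4*(n:ℝ)+5)*(2*(n:ℝ)+2)/(2*(n:ℝ)+3)^2) * (legendreP (2*n+2) x * Qf n x)
        + (2*(n:ℝ)+2)^2/(2*(n:ℝ)+3)^2 * (Qf n x * Qf n x) := by
      intro x
      rw [Qf_succ]
      have h1 : (2*(n:ℝ)+3) ≠ 0 := by positivity
      field_simp
      ring
    have i1 : IntervalIntegrable (fun x : ℝ => (4*(n:ℝ)+5)^2/(2*(n:ℝ)+3)^2 * (legendreP (2*n+2) x * legendreP (2*n+2) x)) volume (-1) 1 :=
      Continuous.intervalIntegrable (continuous_const.mul ((leg_cont (2*n+2)).mul (leg_cont (2*n+2)))) _ _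
    have i2 : IntervalIntegrable (fun x : ℝ => (2*(4*(n:ℝ)+5)*(2*(n:ℝ)+2)/(2*(n:ℝ)+3)^2) * (legendreP (2*n+2) x * Qf n x)) volume (-1) 1 :=
      Continuous.intervalIntegrable (continuous_const.mul ((leg_cont (2*n+2)).mul (Qf_cont n))) _ _
    have i3 : IntervalIntegrable (fun x : ℝ => (2*(n:ℝ)+2)^2/(2*(n:ℝ)+3)^2 * (Qf n x * Qf n x)) volume (-1) 1 :=
      Continuous.intervalIntegrable (continuous_const.mul ((Qf_cont n).mul (Qf_cont n))) _ _
    rw [intervalIntegral.integral_congr (fun x _ => hpt x),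
      intervalIntegral.integral_add (i1.sub i2) i3,
      intervalIntegral.integral_sub i1 i2,
      intervalIntegral.integral_const_mul, intervalIntegral.integral_const_mul,
      intervalIntegral.integral_const_mul,
      norm_leg (2*n+2), Qf_orth n (2*n+2) (by omega), ih]
    have h1 : (2*(n:ℝ)+3) ≠ 0 := by positivity
    have h2 : (2*((2*n+2:ℕ):ℝ)+1) ≠ 0 := by positivity
    push_cast at h2 ⊢
    field_simp
    ring

theorem legendre_odd_filter_integral (n : ℕ) :
    ∫ x in (-1 : ℝ)..1, (legendreP (2 * n + 1) x / x) ^ 2 = 2 := by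
  have h0 : ∀ᵐ (x : ℝ) ∂volume, x ≠ 0 := by
    rw [MeasureTheory.ae_iff]
    simp only [ne_eq, not_not, Set.setOf_eq_eq_singleton]
    exact measure_singleton 0
  have hcong : ∫ x in (-1 : ℝ)..1, (legendreP (2 * n + 1) x / x) ^ 2
      = ∫ x in (-1:ℝ)..1, Qf n x * Qf n x := by
    apply intervalIntegral.integral_congr_ae
    filter_upwards [h0] with x hx _
    rw [Qf_eq n x hx, pow_two]
  rw [hcong, Qf_norm n]
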